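/- For an S-path S = (S_0,...,S_m) with S_0 = 0, S_m = m, and S_j ≤ min(j, S_{j+1}) for j = 1,...,m-1, the number of partitions of {1,...,m} corresponding to S equals the product over all indices j with S_j > S_{j-1} of the binomial coefficient C(j - 1 - S_{j-1}, j - S_j). -/

import Mathlib

/-- An S-path of `m+1` coordinates: `S 0 = 0`, `S m = m`,
and `S j ≤ min j (S (j+1))` for `j = 1, …, m-1`. -/
def IsSPath (m : ℕ) (S : ℕ → ℕ) : Prop :=
  S 0 = 0 ∧ S m = m ∧ ∀ j, 1 ≤ j → j < m → S j ≤ min j (S (j + 1))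

/-- `P` is a set partition of `{1, …, m}`, given as the finset of its (nonempty) cells. -/
def IsPartitionOf (m : ℕ) (P : Finset (Finset ℕ)) : Prop :=
  (∀ C ∈ P, C.Nonempty ∧ C ⊆ Finset.Icc 1 m) ∧
  (∀ i ∈ Finset.Icc 1 m, ∃! C, C ∈ P ∧ i ∈ C)

/-- The partition `P` of `{1, …, m}` corresponds to the S-path `S`: cell maxima are exactly
the ascent locations of `S`, and the cell with maximum `j` has `S j - S (j-1)` elements. -/
def CorrespondsTo (m : ℕ) (S : ℕ → ℕ) (P : Finset (Finset ℕ)) : Prop :=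
  IsPartitionOf m P ∧
  (∀ C ∈ P, ∃ j : ℕ, C.max = (j : WithBot ℕ) ∧ S (j - 1) < S j ∧ C.card = S j - S (j - 1)) ∧
  (∀ j ∈ Finset.Icc 1 m, S (j - 1) < S j → ∃ C ∈ P, C.max = (j : WithBot ℕ))

namespace SPathAux

open Finset

lemma max_eq_coe {C : Finset ℕ} {a : ℕ} (ha : a ∈ C) (h : ∀ b ∈ C, b ≤ a) :
    C.max = (a : WithBot ℕ) :=
  le_antisymm (Finset.max_le fun b hb => WithBot.coe_le_coe.2 (h b hb)) (Finset.le_max ha)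

/-- Generalized correspondence: `P` is a partition of `T` whose cell maxima are
exactly `A`, the cell with max `j` having `c j` elements. -/
def GenCorr (c : ℕ → ℕ) (T A : Finset ℕ) (P : Finset (Finset ℕ)) : Prop :=
  (∀ C ∈ P, C.Nonempty ∧ C ⊆ T) ∧
  (∀ i ∈ T, ∃! C, C ∈ P ∧ i ∈ C) ∧
  (∀ C ∈ P, ∃ j ∈ A, C.max = (j : WithBot ℕ) ∧ C.card = c j) ∧
  (∀ j ∈ A, ∃ C ∈ P, C.max = (j : WithBot ℕ))

open Classical in
noncomputable def F (c : ℕ → ℕ) (T A : Finset ℕ) : Finset (Finset (Finset ℕ)) :=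
  T.powerset.powerset.filter (GenCorr c T A)

lemma mem_F {c : ℕ → ℕ} {T A : Finset ℕ} {P : Finset (Finset ℕ)} :
    P ∈ F c T A ↔ GenCorr c T A P := by
  classical
  simp only [F, mem_filter, mem_powerset]
  refine ⟨fun h => h.2, fun h => ⟨fun C hC => ?_, h⟩⟩
  · exact mem_powerset.2 (h.1 C hC).2

lemma GenCorr.cell_eq {c : ℕ → ℕ} {T A : Finset ℕ} {P : Finset (Finset ℕ)}
    (h : GenCorr c T A P) {C1 C2 : Finset ℕ} {i : ℕ}
    (h1 : C1 ∈ P) (h2 : C2 ∈ P) (hi1 : i ∈ C1) (hi2 : i ∈ C2) : C1 = C2 :=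
  (h.2.1 i ((h.1 C1 h1).2 hi1)).unique ⟨h1, hi1⟩ ⟨h2, hi2⟩

/-- Peeling off the cell `C` with max `a` from a generalized partition. -/
lemma GenCorr.peel {c : ℕ → ℕ} {T A : Finset ℕ} {P : Finset (Finset ℕ)}
    (h : GenCorr c T A P) {a : ℕ} {C : Finset ℕ}
    (hCP : C ∈ P) (hmax : C.max = (a : WithBot ℕ)) :
    GenCorr c (T \ C) (A.erase a) (P.erase C) := by
  have haC : a ∈ C := Finset.mem_of_max hmax
  refine ⟨?_, ?_, ?_, ?_⟩
  · intro C' hC'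
    have hC'P : C' ∈ P := mem_of_mem_erase hC'
    refine ⟨(h.1 C' hC'P).1, fun x hx => mem_sdiff.2 ⟨(h.1 C' hC'P).2 hx, fun hxC => ?_⟩⟩
    exact (ne_of_mem_erase hC') (h.cell_eq hC'P hCP hx hxC)
  · intro i hi
    have hiT : i ∈ T := (mem_sdiff.1 hi).1
    have hiC : i ∉ C := (mem_sdiff.1 hi).2
    obtain ⟨C', ⟨hC'P, hiC'⟩, huniq⟩ := h.2.1 i hiT
    refine ⟨C', ⟨mem_erase.2 ⟨fun hEq => hiC (hEq ▸ hiC'), hC'P⟩, hiC'⟩, ?_⟩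
    rintro C'' ⟨hC''P, hiC''⟩
    exact huniq C'' ⟨mem_of_mem_erase hC''P, hiC''⟩
  · intro C' hC'
    have hC'P : C' ∈ P := mem_of_mem_erase hC'
    obtain ⟨j, hjA, hmax', hcard'⟩ := h.2.2.1 C' hC'P
    refine ⟨j, mem_erase.2 ⟨fun hEq => ?_, hjA⟩, hmax', hcard'⟩
    subst hEq
    exact (ne_of_mem_erase hC')
      (h.cell_eq hC'P hCP (Finset.mem_of_max hmax') haC)
  · intro j hj
    obtain ⟨C', hC'P, hmax'⟩ := h.2.2.2 j (mem_of_mem_erase hj)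
    refine ⟨C', mem_erase.2 ⟨fun hEq => ?_, hC'P⟩, hmax'⟩
    subst hEq
    have : (j : WithBot ℕ) = (a : WithBot ℕ) := hmax' ▸ hmax
    exact (ne_of_mem_erase hj) (by exact_mod_cast this)

/-- Extending a generalized partition by a new cell `insert a Y`. -/
lemma GenCorr.extend {c : ℕ → ℕ} {T A : Finset ℕ} {P' : Finset (Finset ℕ)}
    {a : ℕ} {Y : Finset ℕ} (haA : a ∈ A) (haT : a ∈ T)
    (hY : Y ⊆ T.filter (· < a)) (hYcard : Y.card = c a - 1) (hca : 1 ≤ c a)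
    (h : GenCorr c (T \ insert a Y) (A.erase a) P') :
    GenCorr c T A (insert (insert a Y) P') := by
  set D : Finset ℕ := insert a Y with hD
  have hYlt : ∀ b ∈ Y, b < a := fun b hb => (mem_filter.1 (hY hb)).2
  have haY : a ∉ Y := fun hmem => lt_irrefl a (hYlt a hmem)
  have hDT : D ⊆ T := insert_subset haT (fun b hb => (mem_filter.1 (hY hb)).1)
  have hDmax : D.max = (a : WithBot ℕ) :=
    max_eq_coe (mem_insert_self a Y)
      (fun b hb => by rcases mem_insert.1 hb with rfl | hb; · exact le_rfl
                      · exact (hYlt b hb).le)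
  have hDcard : D.card = c a := by
    rw [card_insert_of_notMem haY, hYcard]; omega
  have hDnotP' : D ∉ P' := by
    intro hmem
    have := (h.1 D hmem).2 (mem_insert_self a Y)
    exact (mem_sdiff.1 this).2 (mem_insert_self a Y)
  refine ⟨?_, ?_, ?_, ?_⟩
  · intro C hC
    rcases mem_insert.1 hC with rfl | hC
    · exact ⟨⟨a, mem_insert_self a Y⟩, hDT⟩
    · exact ⟨(h.1 C hC).1, (h.1 C hC).2.trans (sdiff_subset)⟩
  · intro i hi
    by_cases hiD : i ∈ D
    · refine ⟨D, ⟨mem_insert_self _ _, hiD⟩, ?_⟩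
      rintro C ⟨hCP, hiC⟩
      rcases mem_insert.1 hCP with rfl | hCP'
      · rfl
      · exact absurd hiD (fun hd => (mem_sdiff.1 ((h.1 C hCP').2 hiC)).2 hd)
    · obtain ⟨C', ⟨hC'P, hiC'⟩, huniq⟩ := h.2.1 i (mem_sdiff.2 ⟨hi, hiD⟩)
      refine ⟨C', ⟨mem_insert_of_mem hC'P, hiC'⟩, ?_⟩
      rintro C ⟨hCP, hiC⟩
      rcases mem_insert.1 hCP with rfl | hCP'
      · exact absurd hiC hiD
      · exact huniq C ⟨hCP', hiC⟩
  · intro C hC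
    rcases mem_insert.1 hC with rfl | hC
    · exact ⟨a, haA, hDmax, hDcard⟩
    · obtain ⟨j, hjA, hm, hc⟩ := h.2.2.1 C hC
      exact ⟨j, mem_of_mem_erase hjA, hm, hc⟩
  · intro j hj
    by_cases hja : j = a
    · exact ⟨D, mem_insert_self _ _, hja ▸ hDmax⟩
    · obtain ⟨C', hC'P, hm⟩ := h.2.2.2 j (mem_erase.2 ⟨hja, hj⟩)
      exact ⟨C', mem_insert_of_mem hC'P, hm⟩

lemma gen_count (c : ℕ → ℕ) : ∀ (n : ℕ) (A T : Finset ℕ), A.card = n → A ⊆ T →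
    (∀ j ∈ A, 1 ≤ c j) → (∑ j ∈ A, c j) = T.card →
    (F c T A).card = ∏ j ∈ A,
      Nat.choose ((T.filter (· < j)).card - ∑ j' ∈ A.filter (· < j), c j') (c j - 1) := by
  intro n
  induction n with
  | zero =>
    intro A T hcard hsub hc hsum
    have hA : A = ∅ := card_eq_zero.1 hcard
    subst hA
    have hT : T = ∅ := card_eq_zero.1 (by simpa using hsum.symm)
    subst hT
    have : F c ∅ ∅ = {∅} := by
      ext P
      simp only [mem_F, mem_singleton]
      constructor
      · intro h
        refine eq_empty_iff_forall_notMem.2 fun C hC => ?_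
        obtain ⟨⟨x, hx⟩, hsub'⟩ := h.1 C hC
        exact notMem_empty x (hsub' hx)
      · rintro rfl
        exact ⟨by simp, by simp, by simp, by simp⟩
    rw [this]
    simp
  | succ n ih =>
    intro A T hcard hsub hc hsum
    have hA : A.Nonempty := card_pos.1 (by omega)
    set a := A.min' hA with ha
    have haA : a ∈ A := A.min'_mem hA
    have haT : a ∈ T := hsub haA
    have hamin : ∀ b ∈ A, a ≤ b := fun b hb => A.min'_le b hb
    have hca : 1 ≤ c a := hc a haA
    -- decomposition of F as a disjoint union
    have key : F c T A = ((T.filter (· < a)).powersetCard (c a - 1)).biUnion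
        (fun Y => (F c (T \ insert a Y) (A.erase a)).image (insert (insert a Y))) := by
      ext P
      simp only [mem_biUnion, mem_image, mem_powersetCard, mem_F]
      constructor
      · intro h
        obtain ⟨C, hCP, hmax⟩ := h.2.2.2 a haA
        have haC : a ∈ C := Finset.mem_of_max hmax
        have hCle : ∀ b ∈ C, b ≤ a := fun b hb => by
          exact_mod_cast Finset.le_max_of_eq hb hmax
        have hCcard : C.card = c a := by
          obtain ⟨j, hjA, hm, hcd⟩ := h.2.2.1 C hCP
          have : (j : WithBot ℕ) = (a : WithBot ℕ) := hm ▸ hmax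
          have : j = a := by exact_mod_cast this
          exact this ▸ hcd
        have hCins : insert a (C.erase a) = C := insert_erase haC
        refine ⟨C.erase a, ⟨fun b hb => ?_, ?_⟩, P.erase C, ?_, ?_⟩
        · have hbC : b ∈ C := mem_of_mem_erase hb
          exact mem_filter.2 ⟨(h.1 C hCP).2 hbC,
            lt_of_le_of_ne (hCle b hbC) (ne_of_mem_erase hb)⟩
        · rw [card_erase_of_mem haC, hCcard]
        · rw [hCins]
          exact h.peel hCP hmax
        · rw [hCins, insert_erase hCP]
      · rintro ⟨Y, ⟨hY, hYcard⟩, P', hP', rfl⟩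
        exact GenCorr.extend haA haT hY hYcard hca hP'
    rw [key, card_biUnion]; swap
    · -- pairwise disjointness
      intro Y1 hY1 Y2 hY2 hne
      simp only [mem_coe, mem_powersetCard] at hY1 hY2
      rw [Function.onFun, disjoint_left]
      intro P hP1 hP2
      simp only [mem_image] at hP1 hP2
      obtain ⟨P1, hP1F, hPeq1⟩ := hP1
      obtain ⟨P2, hP2F, hPeq2⟩ := hP2
      have hG : GenCorr c T A P := by
        rw [← hPeq1]
        exact GenCorr.extend haA haT hY1.1 hY1.2 hca (mem_F.1 hP1F)
      have hm1 : insert a Y1 ∈ P := hPeq1 ▸ mem_insert_self _ _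
      have hm2 : insert a Y2 ∈ P := hPeq2 ▸ mem_insert_self _ _
      have heq : insert a Y1 = insert a Y2 :=
        hG.cell_eq hm1 hm2 (mem_insert_self a Y1) (mem_insert_self a Y2)
      have haY1 : a ∉ Y1 := fun hm => lt_irrefl a (mem_filter.1 (hY1.1 hm)).2
      have haY2 : a ∉ Y2 := fun hm => lt_irrefl a (mem_filter.1 (hY2.1 hm)).2
      apply hne
      rw [← erase_insert haY1, ← erase_insert haY2, heq]
    -- each summand
    have hstep : ∀ Y ∈ (T.filter (· < a)).powersetCard (c a - 1),
        ((F c (T \ insert a Y) (A.erase a)).image (insert (insert a Y))).card =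
        ∏ j ∈ A.erase a, Nat.choose
          ((T.filter (· < j)).card - ∑ j' ∈ A.filter (· < j), c j') (c j - 1) := by
      intro Y hYm
      rw [mem_powersetCard] at hYm
      obtain ⟨hY, hYcard⟩ := hYm
      have hYlt : ∀ b ∈ Y, b < a := fun b hb => (mem_filter.1 (hY hb)).2
      have haY : a ∉ Y := fun hm => lt_irrefl a (hYlt a hm)
      set D : Finset ℕ := insert a Y with hD
      have hDT : D ⊆ T := insert_subset haT (fun b hb => (mem_filter.1 (hY hb)).1)
      have hDcard : D.card = c a := by
        rw [card_insert_of_notMem haY, hYcard]; omega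
      -- image injectivity
      rw [Finset.card_image_of_injOn]; swap
      · intro P1 h1 P2 h2 heq
        have hD1 : D ∉ P1 := fun hm => by
          have := ((mem_F.1 h1).1 D hm).2 (mem_insert_self a Y)
          exact (mem_sdiff.1 this).2 (mem_insert_self a Y)
        have hD2 : D ∉ P2 := fun hm => by
          have := ((mem_F.1 h2).1 D hm).2 (mem_insert_self a Y)
          exact (mem_sdiff.1 this).2 (mem_insert_self a Y)
        rw [← erase_insert hD1, ← erase_insert hD2, heq]
      -- apply induction hypothesis
      rw [ih (A.erase a) (T \ D) (by rw [card_erase_of_mem haA, hcard]; rfl)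
        (fun b hb => mem_sdiff.2 ⟨hsub (mem_of_mem_erase hb),
          fun hbD => by
            rcases mem_insert.1 hbD with rfl | hbY
            · exact (ne_of_mem_erase hb) rfl
            · exact absurd (hamin b (mem_of_mem_erase hb)) (not_le.2 (hYlt b hbY))⟩)
        (fun j hj => hc j (mem_of_mem_erase hj))
        (by
          rw [card_sdiff_of_subset hDT, hDcard, ← hsum, ← Finset.add_sum_erase A c haA]
          omega)]
      refine Finset.prod_congr rfl fun j hj => ?_
      have hjA : j ∈ A := mem_of_mem_erase hj
      have haj : a < j := lt_of_le_of_ne (hamin j hjA) (Ne.symm (ne_of_mem_erase hj))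
      have hDsub : D ⊆ T.filter (· < j) :=
        insert_subset (mem_filter.2 ⟨haT, haj⟩)
          (fun b hb => mem_filter.2 ⟨(mem_filter.1 (hY hb)).1, (hYlt b hb).trans haj⟩)
      have hfil : (T \ D).filter (· < j) = T.filter (· < j) \ D := by
        ext x; simp only [mem_filter, mem_sdiff]; tauto
      have hfilcard : ((T \ D).filter (· < j)).card = (T.filter (· < j)).card - c a := by
        rw [hfil, card_sdiff_of_subset hDsub, hDcard]
      have hfe : (A.erase a).filter (· < j) = (A.filter (· < j)).erase a := by
        ext x; simp only [mem_filter, mem_erase]; tauto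
      have haAj : a ∈ A.filter (· < j) := mem_filter.2 ⟨haA, haj⟩
      have hsumerase : ∑ j' ∈ (A.erase a).filter (· < j), c j' =
          ∑ j' ∈ A.filter (· < j), c j' - c a := by
        rw [hfe, ← Finset.add_sum_erase (A.filter (· < j)) c haAj]
        omega
      have h1 : c a ≤ (T.filter (· < j)).card := hDcard ▸ card_le_card hDsub
      have h2 : c a ≤ ∑ j' ∈ A.filter (· < j), c j' := by
        rw [← Finset.add_sum_erase (A.filter (· < j)) c haAj]; omega
      rw [hfilcard, hsumerase]
      congr 1
      omega
    rw [Finset.sum_congr rfl hstep, Finset.sum_const, smul_eq_mul,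
      Finset.card_powersetCard]
    have hfa : A.filter (· < a) = ∅ :=
      filter_eq_empty_iff.2 fun b hb => not_lt.2 (hamin b hb)
    rw [← Finset.mul_prod_erase A _ haA, hfa]
    simp

end SPathAux

/-- The number of partitions of `{1,…,m}` corresponding to an S-path `S` equals
`∏_{j : S_j > S_{j-1}} C(j - 1 - S_{j-1}, j - S_j)`. -/
theorem card_correspondsTo_eq_prod_choose (m : ℕ) (S : ℕ → ℕ) (hS : IsSPath m S) :
    {P : Finset (Finset ℕ) | CorrespondsTo m S P}.ncard =
      ∏ j ∈ (Finset.Icc 1 m).filter (fun j => S (j - 1) < S j),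
        Nat.choose (j - 1 - S (j - 1)) (j - S j) := by
  classical
  obtain ⟨h0, hm, hmin⟩ := hS
  have hmono : ∀ j, 1 ≤ j → j ≤ m → S (j - 1) ≤ S j := by
    intro j h1 h2
    by_cases hj : j = 1
    · subst hj; simp [h0]
    · have h1' : 1 ≤ j - 1 := by omega
      have h2' : j - 1 < m := by omega
      have hx := hmin (j - 1) h1' h2'
      have hj1 : j - 1 + 1 = j := by omega
      rw [hj1] at hx
      exact le_trans hx (min_le_right _ _)
  have hle : ∀ j, j ≤ m → S j ≤ j := by
    intro j hj
    rcases Nat.lt_or_ge j m with h | h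
    · rcases Nat.eq_zero_or_pos j with rfl | hpos
      · simp [h0]
      · exact le_trans (hmin j hpos h) (min_le_left _ _)
    · have hjm : j = m := le_antisymm hj h
      rw [hjm, hm]
  have hsum_Icc : ∀ k, k ≤ m → ∑ j ∈ Finset.Icc 1 k, (S j - S (j - 1)) = S k := by
    intro k
    induction k with
    | zero => intro _; simp [h0]
    | succ k ihk =>
      intro hk
      rw [Finset.sum_Icc_succ_top (by omega), ihk (by omega)]
      have hx := hmono (k + 1) (by omega) hk
      simp only [Nat.add_sub_cancel] at hx ⊢
      omega
  have hseteq : {P : Finset (Finset ℕ) | CorrespondsTo m S P} =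
      ↑(SPathAux.F (fun j => S j - S (j - 1)) (Finset.Icc 1 m)
        ((Finset.Icc 1 m).filter (fun j => S (j - 1) < S j))) := by
    ext P
    simp only [Set.mem_setOf_eq, Finset.mem_coe, SPathAux.mem_F]
    constructor
    · rintro ⟨⟨hp1, hp2⟩, h3, h4⟩
      refine ⟨hp1, hp2, ?_, ?_⟩
      · intro C hC
        obtain ⟨j, hmax, hasc, hcard⟩ := h3 C hC
        have hjC : j ∈ C := Finset.mem_of_max hmax
        have hjT : j ∈ Finset.Icc 1 m := (hp1 C hC).2 hjC
        exact ⟨j, Finset.mem_filter.2 ⟨hjT, hasc⟩, hmax, hcard⟩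
      · intro j hj
        have h' := Finset.mem_filter.1 hj
        exact h4 j h'.1 h'.2
    · rintro ⟨g1, g2, g3, g4⟩
      refine ⟨⟨g1, g2⟩, ?_, ?_⟩
      · intro C hC
        obtain ⟨j, hjA, hmax, hcard⟩ := g3 C hC
        exact ⟨j, hmax, (Finset.mem_filter.1 hjA).2, hcard⟩
      · intro j hj hasc
        exact g4 j (Finset.mem_filter.2 ⟨hj, hasc⟩)
  have hsumAT : ∑ j ∈ (Finset.Icc 1 m).filter (fun j => S (j - 1) < S j),
      (S j - S (j - 1)) = (Finset.Icc 1 m).card := by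
    rw [Finset.sum_filter_of_ne (fun x _ h' => by omega),
      hsum_Icc m le_rfl, hm, Nat.card_Icc]
    omega
  rw [hseteq, Set.ncard_coe_finset,
    SPathAux.gen_count (fun j => S j - S (j - 1)) _ _ _ rfl
      (Finset.filter_subset _ _)
      (fun j hj => by
        have hx := (Finset.mem_filter.1 hj).2
        show 1 ≤ S j - S (j - 1)
        omega)
      hsumAT]
  refine Finset.prod_congr rfl fun j hj => ?_
  have hjm0 := Finset.mem_filter.1 hj
  have hj1 : 1 ≤ j := (Finset.mem_Icc.1 hjm0.1).1
  have hjm : j ≤ m := (Finset.mem_Icc.1 hjm0.1).2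
  have hasc : S (j - 1) < S j := hjm0.2
  have hfT : (Finset.Icc 1 m).filter (· < j) = Finset.Icc 1 (j - 1) := by
    ext x
    simp only [Finset.mem_filter, Finset.mem_Icc]
    omega
  have hfA : ((Finset.Icc 1 m).filter (fun j => S (j - 1) < S j)).filter (· < j) =
      (Finset.Icc 1 (j - 1)).filter (fun x => S (x - 1) < S x) := by
    ext x
    simp only [Finset.mem_filter, Finset.mem_Icc]
    constructor
    · rintro ⟨⟨⟨hx1, _⟩, hx2⟩, hx3⟩
      exact ⟨⟨hx1, by omega⟩, hx2⟩
    · rintro ⟨⟨hx1, hx2⟩, hx3⟩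
      exact ⟨⟨⟨hx1, by omega⟩, hx3⟩, by omega⟩
  have hsA : ∑ j' ∈ ((Finset.Icc 1 m).filter (fun j => S (j - 1) < S j)).filter (· < j),
      (S j' - S (j' - 1)) = S (j - 1) := by
    rw [hfA, Finset.sum_filter_of_ne (fun x _ h' => by omega)]
    exact hsum_Icc (j - 1) (by omega)
  have hSj : S j ≤ j := hle j hjm
  have hSj1 : S (j - 1) ≤ j - 1 := hle (j - 1) (by omega)
  rw [hfT, hsA, Nat.card_Icc]
  have hcj : S j - S (j - 1) - 1 = (j - 1 + 1 - 1 - S (j - 1)) - (j - S j) := by omega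
  rw [hcj, Nat.choose_symm (by omega)]
  congr 1
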